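/- Let A be a real d×d matrix, B a real d×m matrix, λ > 0, y_d ∈ ℝ^d, 0 ≤ a < b and ω ∈ ℝ^m. Let g : [0, ∞) → ℝ^d be continuous. Suppose φ : [0, ∞) → ℝ^d is differentiable with −φ'(t) = Aᵀφ(t) + e^{−λt}(g(t) − y_d) for all t > 0, and δ : [0, ∞) → ℝ^d is continuous, δ(0) = 0, and δ is differentiable with δ'(t) = Aδ(t) + Bω for t ∈ (a, b) and δ'(t) = Aδ(t) for t ∉ [a, b]. Assume that t ↦ e^{−λt}⟨g(t) − y_d, δ(t)⟩ is integrable on (0, ∞), that t ↦ ⟨φ(t), Bω⟩ is integrable on (a, b), and that ⟨φ(t), δ(t)⟩ → 0 as t → ∞. Then ∫₀^∞ e^{−λt}⟨g(t) − y_d, δ(t)⟩ dt = ∫_a^b ⟨φ(t), Bω⟩ dt. -/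

import Mathlib

/-- The Euclidean inner product on `ℝ^d` (as `Fin d → ℝ`). -/
def eInner {d : ℕ} (x y : Fin d → ℝ) : ℝ := ∑ i, x i * y i

open MeasureTheory Set Filter Real

lemma eInner_zero_right {d : ℕ} (x : Fin d → ℝ) : eInner x 0 = 0 := by
  simp [eInner]

lemma abs_eInner_le {d : ℕ} (x y : Fin d → ℝ) : |eInner x y| ≤ d * (‖x‖ * ‖y‖) := by
  calc |eInner x y| ≤ ∑ i, |x i * y i| := Finset.abs_sum_le_sum_abs _ _
    _ ≤ ∑ _i : Fin d, ‖x‖ * ‖y‖ := by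
        refine Finset.sum_le_sum fun i _ => ?_
        rw [abs_mul]
        have h1 : |x i| ≤ ‖x‖ := (Real.norm_eq_abs (x i)) ▸ norm_le_pi_norm x i
        have h2 : |y i| ≤ ‖y‖ := (Real.norm_eq_abs (y i)) ▸ norm_le_pi_norm y i
        exact mul_le_mul h1 h2 (abs_nonneg _) ((abs_nonneg _).trans h1)
    _ = d * (‖x‖ * ‖y‖) := by
        simp [Finset.sum_const, Finset.card_univ, nsmul_eq_mul]

lemma hasDerivAt_eInner {d : ℕ} {f g : ℝ → Fin d → ℝ} {f' g' : Fin d → ℝ} {t : ℝ}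
    (hf : HasDerivAt f f' t) (hg : HasDerivAt g g' t) :
    HasDerivAt (fun s => eInner (f s) (g s)) (eInner f' (g t) + eInner (f t) g') t := by
  have h : ∀ i ∈ (Finset.univ : Finset (Fin d)), HasDerivAt (fun s => f s i * g s i)
      (f' i * g t i + f t i * g' i) t :=
    fun i _ => (hasDerivAt_pi.1 hf i).mul (hasDerivAt_pi.1 hg i)
  have H := HasDerivAt.fun_sum h
  simpa [eInner, Finset.sum_add_distrib] using H

lemma continuous_eInner {d : ℕ} :
    Continuous fun p : (Fin d → ℝ) × (Fin d → ℝ) => eInner p.1 p.2 := by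
  unfold eInner
  exact continuous_finset_sum _ fun i _ =>
    ((continuous_apply i).comp continuous_fst).mul ((continuous_apply i).comp continuous_snd)

lemma tendsto_eInner {d : ℕ} {α : Type*} {l : Filter α} {f g : α → Fin d → ℝ} {x y : Fin d → ℝ}
    (hf : Tendsto f l (nhds x)) (hg : Tendsto g l (nhds y)) :
    Tendsto (fun s => eInner (f s) (g s)) l (nhds (eInner x y)) := by
  unfold eInner
  exact tendsto_finset_sum _ fun i _ =>
    (((continuous_apply i).tendsto x).comp hf).mul (((continuous_apply i).tendsto y).comp hg)

lemma eInner_transpose {d : ℕ} (A : Matrix (Fin d) (Fin d) ℝ) (x y : Fin d → ℝ) :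
    eInner (A.transpose.mulVec x) y = eInner x (A.mulVec y) := by
  simp only [eInner, Matrix.mulVec, dotProduct, Matrix.transpose_apply,
    Finset.sum_mul, Finset.mul_sum]
  rw [Finset.sum_comm]
  exact Finset.sum_congr rfl fun i _ => Finset.sum_congr rfl fun j _ => by ring

lemma eInner_sub_smul_left {d : ℕ} (w u y : Fin d → ℝ) (c : ℝ) :
    eInner (-w - c • u) y = -eInner w y - c * eInner u y := by
  simp [eInner, sub_mul, neg_mul, Finset.sum_sub_distrib, Finset.mul_sum, mul_assoc]

lemma eInner_add_right {d : ℕ} (x u v : Fin d → ℝ) :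
    eInner x (u + v) = eInner x u + eInner x v := by
  simp [eInner, mul_add, Finset.sum_add_distrib]

lemma gronwallBound_mono_x {δ K ε x y : ℝ} (hδ : 0 ≤ δ) (hK : 0 < K) (hε : 0 ≤ ε) (hxy : x ≤ y) :
    gronwallBound δ K ε x ≤ gronwallBound δ K ε y := by
  rw [gronwallBound_of_K_ne_0 hK.ne']
  have he : Real.exp (K * x) ≤ Real.exp (K * y) :=
    Real.exp_le_exp.2 (mul_le_mul_of_nonneg_left hxy hK.le)
  have h2 : 0 ≤ ε / K := div_nonneg hε hK.le
  simp only
  nlinarith [Real.exp_pos (K * x)]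

lemma left_lim_ftc {ρ h : ℝ → ℝ} {a b L : ℝ} (hab : a < b)
    (hint : IntegrableOn ρ (Icc a b))
    (heq : ∀ ε ∈ Ioo a b, ∫ t in ε..b, ρ t = h b - h ε)
    (hlim : Tendsto h (nhdsWithin a (Ioi a)) (nhds L)) :
    ∫ t in a..b, ρ t = h b - L := by
  have huIcc : uIcc a b = Icc a b := uIcc_of_le hab.le
  have prim := intervalIntegral.continuousOn_primitive_interval_left (a := a) (b := b)
    (μ := volume) (f := ρ) (huIcc ▸ hint)
  have T1 : Tendsto (fun x => ∫ t in x..b, ρ t) (nhdsWithin a (Ioi a))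
      (nhds (∫ t in a..b, ρ t)) := by
    have h1 : ContinuousWithinAt (fun x => ∫ t in x..b, ρ t) (uIcc a b) a :=
      prim a (left_mem_uIcc)
    have h2 : nhdsWithin a (Ioo a b) ≤ nhdsWithin a (uIcc a b) :=
      nhdsWithin_mono a (huIcc ▸ Ioo_subset_Icc_self)
    exact (h1.mono_left h2).mono_left (le_of_eq (nhdsWithin_Ioo_eq_nhdsGT hab).symm)
  have T2 : Tendsto (fun ε => h b - h ε) (nhdsWithin a (Ioi a)) (nhds (h b - L)) :=
    tendsto_const_nhds.sub hlim
  have hev : (fun x => ∫ t in x..b, ρ t) =ᶠ[nhdsWithin a (Ioi a)] fun ε => h b - h ε := by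
    filter_upwards [Ioo_mem_nhdsGT_of_mem (⟨le_rfl, hab⟩ : a ∈ Ico a b)] with ε hε
    exact heq ε hε
  exact tendsto_nhds_unique T1 (T2.congr' hev.symm)

/-- equation (EqBomega) in the proof of Proposition 5.1: the adjoint
identity `∫₀^∞ e^{-λt} ⟨g(t) - y_d, δ(t)⟩ dt = ∫_a^b ⟨φ(t), Bω⟩ dt`. -/
theorem adjoint_identity
    (d m : ℕ) (A : Matrix (Fin d) (Fin d) ℝ) (B : Matrix (Fin d) (Fin m) ℝ)
    (lam : ℝ) (hlam : 0 < lam) (yd : Fin d → ℝ)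
    (a b : ℝ) (ha : 0 ≤ a) (hab : a < b) (ω : Fin m → ℝ)
    (g φ δ : ℝ → Fin d → ℝ)
    (hg : ContinuousOn g (Set.Ici 0))
    (hφ : ∀ t > (0 : ℝ), HasDerivAt φ
      (-(A.transpose.mulVec (φ t)) - Real.exp (-lam * t) • (g t - yd)) t)
    (hδc : ContinuousOn δ (Set.Ici 0)) (hδ0 : δ 0 = 0)
    (hδ1 : ∀ t ∈ Set.Ioo a b, HasDerivAt δ (A.mulVec (δ t) + B.mulVec ω) t)
    (hδ2 : ∀ t > (0 : ℝ), t ∉ Set.Icc a b → HasDerivAt δ (A.mulVec (δ t)) t)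
    (hint1 : MeasureTheory.IntegrableOn
      (fun t => Real.exp (-lam * t) * eInner (g t - yd) (δ t)) (Set.Ioi 0))
    (hint2 : MeasureTheory.IntegrableOn
      (fun t => eInner (φ t) (B.mulVec ω)) (Set.Ioo a b))
    (hlim : Filter.Tendsto (fun t => eInner (φ t) (δ t)) Filter.atTop (nhds 0)) :
    ∫ t in Set.Ioi (0 : ℝ), Real.exp (-lam * t) * eInner (g t - yd) (δ t)
      = ∫ t in a..b, eInner (φ t) (B.mulVec ω) := by
  classical
  have hb0 : (0:ℝ) < b := lt_of_le_of_lt ha hab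
  set F : ℝ → ℝ := fun t => Real.exp (-lam * t) * eInner (g t - yd) (δ t) with hFdef
  set G : ℝ → ℝ := fun t => eInner (φ t) (B.mulVec ω) with hGdef
  set h : ℝ → ℝ := fun t => eInner (φ t) (δ t) with hhdef
  -- continuity facts
  have hφc : ∀ t : ℝ, 0 < t → ContinuousAt φ t := fun t ht => (hφ t ht).continuousAt
  have hδca : ∀ t : ℝ, 0 < t → ContinuousAt δ t := fun t ht =>
    (hδc t (le_of_lt ht)).continuousAt (Ici_mem_nhds ht)
  have hhc : ∀ t : ℝ, 0 < t → ContinuousAt h t := fun t ht =>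
    tendsto_eInner (hφc t ht) (hδca t ht)
  -- derivative of h on (a,b)
  have hd1 : ∀ t ∈ Ioo a b, HasDerivAt h (-(F t) + G t) t := by
    intro t ht
    have ht0 : 0 < t := lt_of_le_of_lt ha ht.1
    have H := hasDerivAt_eInner (hφ t ht0) (hδ1 t ht)
    have e1 : eInner (-(A.transpose.mulVec (φ t)) - Real.exp (-lam * t) • (g t - yd)) (δ t)
        + eInner (φ t) (A.mulVec (δ t) + B.mulVec ω) = -(F t) + G t := by
      rw [eInner_sub_smul_left, eInner_add_right, eInner_transpose]
      simp only [hFdef, hGdef]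
      ring
    rw [← e1]
    exact H
  -- derivative of h outside [a,b]
  have hd2 : ∀ t : ℝ, 0 < t → t ∉ Icc a b → HasDerivAt h (-(F t)) t := by
    intro t ht0 hmem
    have H := hasDerivAt_eInner (hφ t ht0) (hδ2 t ht0 hmem)
    have e1 : eInner (-(A.transpose.mulVec (φ t)) - Real.exp (-lam * t) • (g t - yd)) (δ t)
        + eInner (φ t) (A.mulVec (δ t)) = -(F t) := by
      have e2 : A.mulVec (δ t) = A.mulVec (δ t) + 0 := by simp
      rw [eInner_sub_smul_left, e2, eInner_add_right, eInner_transpose, eInner_zero_right]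
      simp only [hFdef]
      ring
    rw [← e1]
    exact H
  -- φ is bounded on (0,1]
  have φbound : ∃ C : ℝ, ∀ t ∈ Ioc (0:ℝ) 1, ‖φ t‖ ≤ C := by
    set T := LinearMap.toContinuousLinearMap (Matrix.mulVecLin A.transpose) with hT
    set K : ℝ := ‖T‖ + 1 with hK
    have hK0 : 0 < K := by positivity
    have hgc : ContinuousOn (fun t : ℝ => Real.exp (-lam * t) • (g t - yd)) (Icc 0 1) := by
      apply ContinuousOn.fun_smul
      · exact (Real.continuous_exp.comp (continuous_const.mul continuous_id)).continuousOn
      · exact (hg.mono (Icc_subset_Ici_self)).sub continuousOn_const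
    obtain ⟨M0, hM0⟩ := (isCompact_Icc (a := (0:ℝ)) (b := 1)).exists_bound_of_continuousOn hgc
    set M : ℝ := max M0 0 with hM
    have hM0' : 0 ≤ M := le_max_right _ _
    refine ⟨gronwallBound ‖φ 1‖ K M 1, ?_⟩
    intro t ht
    set ψ : ℝ → Fin d → ℝ := fun s => φ (1 - s) with hψ
    have key := norm_le_gronwallBound_of_norm_deriv_right_le (f := ψ)
      (f' := fun s => A.transpose.mulVec (φ (1 - s))
        + Real.exp (-lam * (1 - s)) • (g (1 - s) - yd))
      (δ := ‖φ 1‖) (K := K) (ε := M) (a := 0) (b := 1 - t)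
      (by -- continuity
        intro s hs
        have h1s : 0 < 1 - s := by
          rcases hs with ⟨hs1, hs2⟩
          have := ht.1
          linarith
        exact ((hφc (1 - s) h1s).comp
          ((continuous_const.sub continuous_id).continuousAt)).continuousWithinAt)
      (by -- derivative
        intro s hs
        have h1s : 0 < 1 - s := by
          rcases hs with ⟨hs1, hs2⟩
          have := ht.1
          linarith
        have Hc : HasDerivAt (fun s : ℝ => 1 - s) (-1) s := by
          simpa using (hasDerivAt_id s).const_sub (1:ℝ)
        have Hcomp := HasDerivAt.scomp s (hφ (1 - s) h1s) Hc
        have : HasDerivAt ψ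
            (A.transpose.mulVec (φ (1 - s))
              + Real.exp (-lam * (1 - s)) • (g (1 - s) - yd)) s := by
          refine Hcomp.congr_deriv ?_
          rw [neg_one_smul]
          rw [neg_sub']
          simp [sub_neg_eq_add]
        exact this.hasDerivWithinAt)
      (le_of_eq (by simp [hψ]))
      (by -- bound
        intro s hs
        have h1s1 : 1 - s ∈ Icc (0:ℝ) 1 := by
          constructor
          · rcases hs with ⟨hs1, hs2⟩; have := ht.1; linarith
          · rcases hs with ⟨hs1, hs2⟩; linarith
        calc ‖A.transpose.mulVec (φ (1 - s))
              + Real.exp (-lam * (1 - s)) • (g (1 - s) - yd)‖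
            ≤ ‖A.transpose.mulVec (φ (1 - s))‖
              + ‖Real.exp (-lam * (1 - s)) • (g (1 - s) - yd)‖ := norm_add_le _ _
          _ ≤ ‖T‖ * ‖ψ s‖ + M := by
              gcongr
              · have := T.le_opNorm (φ (1 - s))
                have hTx : T (φ (1 - s)) = A.transpose.mulVec (φ (1 - s)) := rfl
                rw [← hTx]
                exact this
              · exact le_trans (hM0 (1 - s) h1s1) (le_max_left _ _)
          _ ≤ K * ‖ψ s‖ + M := by
              have : ‖T‖ * ‖ψ s‖ ≤ K * ‖ψ s‖ :=
                mul_le_mul_of_nonneg_right (by rw [hK]; linarith) (norm_nonneg _)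
              linarith)
      (1 - t) ⟨by linarith [ht.2], le_refl _⟩
    have : ‖ψ (1 - t)‖ = ‖φ t‖ := by rw [hψ]; norm_num
    rw [this] at key
    calc ‖φ t‖ ≤ gronwallBound ‖φ 1‖ K M (1 - t - 0) := key
      _ ≤ gronwallBound ‖φ 1‖ K M 1 :=
          gronwallBound_mono_x (norm_nonneg _) hK0 hM0' (by linarith [ht.1])
  -- h tends to 0 at 0+
  have Lzero : Tendsto h (nhdsWithin 0 (Ioi 0)) (nhds 0) := by
    obtain ⟨C, hC⟩ := φbound
    have hC0 : 0 ≤ C := le_trans (norm_nonneg _) (hC 1 ⟨one_pos, le_rfl⟩)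
    have hδ0' : Tendsto (fun t => ‖δ t‖) (nhdsWithin 0 (Ioi 0)) (nhds 0) := by
      have h1 : Tendsto δ (nhdsWithin 0 (Ioi 0)) (nhds (δ 0)) :=
        (hδc 0 Set.self_mem_Ici).mono_left (nhdsWithin_mono 0 Ioi_subset_Ici_self)
      rw [hδ0] at h1
      simpa [Function.comp_def] using (continuous_norm.tendsto 0).comp h1
    apply squeeze_zero_norm' (a := fun t => (d : ℝ) * C * ‖δ t‖)
    · filter_upwards [Ioc_mem_nhdsGT_of_mem (⟨le_rfl, one_pos⟩ : (0:ℝ) ∈ Ico 0 1)] with t htmem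
      have h1 : |h t| ≤ (d : ℝ) * (‖φ t‖ * ‖δ t‖) := abs_eInner_le _ _
      have h2 : ‖φ t‖ * ‖δ t‖ ≤ C * ‖δ t‖ :=
        mul_le_mul_of_nonneg_right (hC t htmem) (norm_nonneg _)
      rw [Real.norm_eq_abs]
      calc |h t| ≤ (d : ℝ) * (‖φ t‖ * ‖δ t‖) := h1
        _ ≤ (d : ℝ) * (C * ‖δ t‖) := by
            exact mul_le_mul_of_nonneg_left h2 (Nat.cast_nonneg d)
        _ = (d : ℝ) * C * ‖δ t‖ := by ring
    · have := hδ0'.const_mul ((d : ℝ) * C)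
      simpa using this
  -- integrability pieces
  have hIoc0a : IntegrableOn F (Ioc 0 a) := hint1.mono_set Ioc_subset_Ioi_self
  have hIocab : IntegrableOn F (Ioc a b) :=
    hint1.mono_set (fun x hx => lt_of_le_of_lt ha hx.1)
  have hIooab : IntegrableOn F (Ioo a b) :=
    hint1.mono_set (fun x hx => lt_of_le_of_lt ha hx.1)
  have hIoib : IntegrableOn F (Ioi b) := hint1.mono_set (Ioi_subset_Ioi hb0.le)
  -- J3 : ∫_{Ioi b} F = h b
  have J3 : ∫ t in Ioi b, F t = h b := by
    have H := MeasureTheory.integral_Ioi_of_hasDerivAt_of_tendsto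
      (f := h) (f' := fun t => -(F t)) (a := b) (m := 0)
      ((hhc b hb0).continuousWithinAt)
      (fun t htb => hd2 t (lt_trans hb0 htb) (fun hmem => absurd hmem.2 (not_le.2 htb)))
      hIoib.neg hlim
    have H2 : ∫ t in Ioi b, -(F t) = - ∫ t in Ioi b, F t := by
      rw [MeasureTheory.integral_neg]
    rw [H2] at H
    linarith
  -- J2 : interval FTC on (a, b) via limit
  have hLa : Tendsto h (nhdsWithin a (Ioi a)) (nhds (h a)) := by
    rcases eq_or_lt_of_le ha with heq | ha0
    · have : h a = 0 := by simp [hhdef, ← heq, hδ0, eInner_zero_right]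
      rw [this, ← heq]
      exact Lzero
    · exact (hhc a ha0).tendsto.mono_left nhdsWithin_le_nhds
  have hGint : IntegrableOn G (Ioo a b) := hint2
  have hρint : IntegrableOn (fun t => -(F t) + G t) (Icc a b) := by
    rw [integrableOn_Icc_iff_integrableOn_Ioo]
    exact hIooab.neg.add hGint
  have J2 : ∫ t in a..b, (-(F t) + G t) = h b - h a := by
    apply left_lim_ftc hab hρint _ hLa
    intro ε hε
    have hε0 : 0 < ε := lt_of_le_of_lt ha hε.1
    apply intervalIntegral.integral_eq_sub_of_hasDerivAt_of_le hε.2.le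
    · intro t htmem
      exact (hhc t (lt_of_lt_of_le hε0 htmem.1)).continuousWithinAt
    · intro t htmem
      exact hd1 t ⟨lt_trans hε.1 htmem.1, htmem.2⟩
    · apply MeasureTheory.IntegrableOn.intervalIntegrable
      rw [uIcc_of_le hε.2.le]
      exact hρint.mono_set (Icc_subset_Icc hε.1.le le_rfl)
  -- J1 : ∫_{Ioc 0 a} F = -(h a)
  have J1 : ∫ t in Ioc 0 a, F t = -(h a) := by
    rcases eq_or_lt_of_le ha with heq | ha0
    · have h1 : Ioc (0:ℝ) a = ∅ := by rw [← heq]; exact Ioc_self 0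
      have h2 : h a = 0 := by simp [hhdef, ← heq, hδ0, eInner_zero_right]
      rw [h1, h2]
      simp
    · have hFint : IntegrableOn (fun t => -(F t)) (Icc 0 a) := by
        rw [integrableOn_Icc_iff_integrableOn_Ioo]
        exact (hint1.mono_set (fun x hx => hx.1)).neg
      have HH : ∫ t in (0:ℝ)..a, (-(F t)) = h a - 0 := by
        apply left_lim_ftc ha0 hFint _ Lzero
        intro ε hε
        apply intervalIntegral.integral_eq_sub_of_hasDerivAt_of_le hε.2.le
        · intro t htmem
          exact (hhc t (lt_of_lt_of_le hε.1 htmem.1)).continuousWithinAt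
        · intro t htmem
          refine hd2 t (lt_trans hε.1 htmem.1) ?_
          intro hmem
          exact absurd hmem.1 (not_le.2 htmem.2)
        · apply MeasureTheory.IntegrableOn.intervalIntegrable
          rw [uIcc_of_le hε.2.le]
          exact hFint.mono_set (Icc_subset_Icc hε.1.le le_rfl)
      rw [intervalIntegral.integral_neg, intervalIntegral.integral_of_le ha0.le] at HH
      linarith
  -- splitting the full integral
  have hsplit : ∫ t in Ioi (0:ℝ), F t
      = (∫ t in Ioc 0 a, F t) + ((∫ t in Ioc a b, F t) + ∫ t in Ioi b, F t) := by
    have e1 : Ioi (0:ℝ) = Ioc 0 a ∪ Ioi a := (Ioc_union_Ioi_eq_Ioi ha).symm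
    have e2 : Ioi a = Ioc a b ∪ Ioi b := (Ioc_union_Ioi_eq_Ioi hab.le).symm
    rw [e1, MeasureTheory.setIntegral_union (Ioc_disjoint_Ioi le_rfl) measurableSet_Ioi hIoc0a
      (hint1.mono_set (Ioi_subset_Ioi ha)), e2,
      MeasureTheory.setIntegral_union (Ioc_disjoint_Ioi le_rfl) measurableSet_Ioi hIocab hIoib]
  -- convert interval integrals
  have hFI : IntervalIntegrable F MeasureTheory.volume a b :=
    (intervalIntegrable_iff_integrableOn_Ioc_of_le hab.le).2 hIocab
  have hGI : IntervalIntegrable G MeasureTheory.volume a b :=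
    (intervalIntegrable_iff_integrableOn_Ioc_of_le hab.le).2
      ((integrableOn_Ioc_iff_integrableOn_Ioo enorm_ne_top).2 hGint)
  have hsplit2 : ∫ t in a..b, (-(F t) + G t)
      = -(∫ t in a..b, F t) + ∫ t in a..b, G t := by
    have hFIneg : IntervalIntegrable (fun t => -(F t)) MeasureTheory.volume a b := hFI.neg
    rw [intervalIntegral.integral_add hFIneg hGI, intervalIntegral.integral_neg]
  have hFab : ∫ t in a..b, F t = ∫ t in Ioc a b, F t :=
    intervalIntegral.integral_of_le hab.le
  rw [hsplit, J1, J3]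
  rw [hsplit2, hFab] at J2
  linarith
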